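/- The value I_n of the first-split size satisfies ∑_{i=1}^{n−1} (n−1)! ∫_0^∞ dθ / ((θ+i)[θ+1]_{n−1}) = 1, i.e., the formula P(I_n = i) = (n−1)! ∫_0^∞ dθ/((θ+i)[θ+1]_{n−1}) defines a probability distribution on {1, ..., n−1}. -/

import Mathlib

open MeasureTheory Set Filter Topology

/-- `∑_{i=1}^{n−1} (n−1)! ∫_0^∞ dθ/((θ+i)[θ+1]_{n−1}) = 1`, i.e. the
first-split law of the Ewens fragmentation is a probability distribution on `{1,…,n−1}`. -/
theorem first_split_law_sums_to_one (n : ℕ) (hn : 2 ≤ n) :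
    ∑ i ∈ Finset.Icc 1 (n - 1),
        (Nat.factorial (n - 1) : ℝ) *
          ∫ θ in Set.Ioi (0:ℝ),
            1 / ((θ + i) * ∏ j ∈ Finset.range (n - 1), (θ + 1 + j)) = 1 := by
  classical
  set m := n - 1 with hm
  have hm1 : 1 ≤ m := by omega
  set c : ℝ := (Nat.factorial m : ℝ) with hc
  have hcpos : 0 < c := by positivity
  set P : ℝ → ℝ := fun θ => ∏ j ∈ Finset.range m, (θ + 1 + j) with hPdef
  have hPpos : ∀ θ : ℝ, 0 ≤ θ → 0 < P θ := by
    intro θ hθ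
    apply Finset.prod_pos
    intro j _
    positivity
  set S : ℝ → ℝ := fun θ => ∑ i ∈ Finset.range m, ∏ j ∈ (Finset.range m).erase i, (θ + 1 + j)
    with hSdef
  have hSderiv : ∀ θ : ℝ, HasDerivAt P (S θ) θ := by
    intro θ
    have := HasDerivAt.finset_prod (u := Finset.range m)
      (f := fun (i : ℕ) (x : ℝ) => x + 1 + i) (f' := fun _ => (1:ℝ)) (x := θ)
      (fun i _ => by simpa [add_assoc] using (hasDerivAt_id θ).add_const (1 + (i:ℝ)))
    rw [show P = ∏ i ∈ Finset.range m, fun x : ℝ => x + 1 + (i:ℝ) by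
      funext x; simp [hPdef, Finset.prod_apply], hSdef]
    simpa using this
  set F : ℝ → ℝ := fun θ => -c / P θ with hFdef
  set G : ℝ → ℝ := fun θ => c * S θ / (P θ) ^ 2 with hGdef
  have hFderiv : ∀ θ ∈ Ici (0:ℝ), HasDerivAt F (G θ) θ := by
    intro θ hθ
    have hPne : P θ ≠ 0 := (hPpos θ hθ).ne'
    have h1 : HasDerivAt (fun x => (P x)⁻¹) (-S θ / (P θ) ^ 2) θ := (hSderiv θ).inv hPne
    have h2 := h1.const_mul (-c)
    have : F = fun x => -c * (P x)⁻¹ := by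
      funext x; rw [hFdef]; ring
    rw [this]
    have e : G θ = -c * (-S θ / P θ ^ 2) := by simp only [hGdef]; ring
    rw [e]; exact h2
  have hkey : ∀ θ : ℝ, 0 ≤ θ →
      G θ = ∑ i ∈ Finset.range m, c * (1 / ((θ + 1 + i) * P θ)) := by
    intro θ hθ
    have hPne : P θ ≠ 0 := (hPpos θ hθ).ne'
    simp only [hGdef, hSdef]
    rw [Finset.mul_sum, Finset.sum_div]
    refine Finset.sum_congr rfl fun i hi => ?_
    have hfi : (0:ℝ) < θ + 1 + i := by
      have := Nat.cast_nonneg (α := ℝ) i; linarith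
    have h1 : (∏ j ∈ (Finset.range m).erase i, (θ + 1 + j)) * (θ + 1 + i) = P θ :=
      Finset.prod_erase_mul _ _ hi
    have h2 : (∏ j ∈ (Finset.range m).erase i, (θ + 1 + j)) = P θ / (θ + 1 + i) :=
      (eq_div_iff hfi.ne').mpr h1
    rw [h2]
    field_simp
  -- tendsto
  have hPge : ∀ θ : ℝ, 0 ≤ θ → θ + 1 ≤ P θ := by
    intro θ hθ
    have h0 : (0:ℕ) ∈ Finset.range m := Finset.mem_range.mpr hm1
    have hps : P θ = (θ + 1 + ((0:ℕ):ℝ)) * ∏ j ∈ (Finset.range m).erase 0, (θ + 1 + j) :=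
      (Finset.mul_prod_erase _ _ h0).symm
    norm_num at hps
    have h1 : (1:ℝ) ≤ ∏ j ∈ (Finset.range m).erase 0, (θ + 1 + j) := by
      calc (1:ℝ) = ∏ _j ∈ (Finset.range m).erase 0, (1:ℝ) := by simp
        _ ≤ _ := Finset.prod_le_prod (fun _ _ => zero_le_one)
            (fun j _ => by have := Nat.cast_nonneg (α := ℝ) j; linarith)
    nlinarith [h1, hps]
  have hPtop : Tendsto P atTop atTop := by
    apply tendsto_atTop_mono' atTop ?_ (tendsto_atTop_add_const_right _ 1 tendsto_id)
    filter_upwards [eventually_ge_atTop (0:ℝ)] with θ hθ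
    simpa using hPge θ hθ
  have hFtend : Tendsto F atTop (𝓝 0) := by
    have : Tendsto (fun θ => c / P θ) atTop (𝓝 0) :=
      Tendsto.div_atTop tendsto_const_nhds hPtop
    have h2 := this.neg
    rw [neg_zero] at h2
    refine h2.congr fun θ => ?_
    rw [hFdef]; ring
  have hGnonneg : ∀ θ ∈ Ioi (0:ℝ), 0 ≤ G θ := by
    intro θ hθ
    rw [hkey θ (le_of_lt hθ)]
    apply Finset.sum_nonneg
    intro i _
    have hPθ := hPpos θ (le_of_lt hθ)
    have hfi : (0:ℝ) < θ + 1 + i := by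
      have := Nat.cast_nonneg (α := ℝ) i
      have : (0:ℝ) < θ := hθ
      linarith [Nat.cast_nonneg (α := ℝ) i]
    exact mul_nonneg hcpos.le (one_div_nonneg.mpr (mul_nonneg hfi.le hPθ.le))
  have hInt : IntegrableOn G (Ioi (0:ℝ)) :=
    integrableOn_Ioi_deriv_of_nonneg' hFderiv hGnonneg hFtend
  have hval : ∫ θ in Ioi (0:ℝ), G θ = 0 - F 0 :=
    integral_Ioi_of_hasDerivAt_of_nonneg' hFderiv hGnonneg hFtend
  have hP0 : P 0 = c := by
    rw [hPdef, hc]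
    push_cast [← Finset.prod_range_add_one_eq_factorial]
    refine Finset.prod_congr rfl fun j _ => by ring
  have hvalue : ∫ θ in Ioi (0:ℝ), G θ = 1 := by
    rw [hval, hFdef]
    simp only [hP0]
    field_simp
    norm_num
  -- integrability of each term
  have hterm : ∀ i ∈ Finset.Icc 1 m,
      IntegrableOn (fun θ => c * (1 / ((θ + (i:ℝ)) * P θ))) (Ioi (0:ℝ)) := by
    intro i hi
    obtain ⟨hi1, him⟩ := Finset.mem_Icc.mp hi
    apply hInt.mono'
    · apply ContinuousOn.aestronglyMeasurable _ measurableSet_Ioi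
      apply ContinuousOn.mul continuousOn_const
      apply ContinuousOn.div continuousOn_const
      · exact (continuousOn_id.add continuousOn_const).mul (by fun_prop)
      · intro θ hθ
        simp only [mem_Ioi] at hθ
        have h1 := hPpos θ (le_of_lt hθ)
        have h2 : (0:ℝ) < θ + i := by
          have := Nat.cast_nonneg (α := ℝ) i
          linarith
        exact (mul_pos h2 h1).ne'
    · filter_upwards [ae_restrict_mem measurableSet_Ioi] with θ hθ
      simp only [mem_Ioi] at hθ
      have hθ0 : (0:ℝ) ≤ θ := le_of_lt hθ
      have hPθ := hPpos θ hθ0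
      have hfi : (0:ℝ) < θ + i := by
        have := Nat.cast_nonneg (α := ℝ) i; linarith
      rw [Real.norm_eq_abs, abs_of_nonneg
        (mul_nonneg hcpos.le (one_div_nonneg.mpr (mul_nonneg hfi.le hPθ.le)))]
      rw [hkey θ hθ0]
      have hmem : i - 1 ∈ Finset.range m := Finset.mem_range.mpr (by omega)
      have heq : θ + 1 + ((i - 1 : ℕ) : ℝ) = θ + i := by
        have : ((i - 1 : ℕ) : ℝ) = (i : ℝ) - 1 := by
          push_cast [Nat.cast_sub hi1]; ring
        rw [this]; ring
      calc c * (1 / ((θ + i) * P θ)) = c * (1 / ((θ + 1 + ((i-1:ℕ):ℝ)) * P θ)) := by rw [heq]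
        _ ≤ ∑ j ∈ Finset.range m, c * (1 / ((θ + 1 + j) * P θ)) := by
            apply Finset.single_le_sum (f := fun j : ℕ => c * (1 / ((θ + 1 + (j:ℝ)) * P θ)))
              (fun j _ => mul_nonneg hcpos.le (one_div_nonneg.mpr
                (mul_nonneg (by have := Nat.cast_nonneg (α := ℝ) j; linarith) hPθ.le))) hmem
  -- main computation
  calc ∑ i ∈ Finset.Icc 1 m, c * ∫ θ in Ioi (0:ℝ), 1 / ((θ + i) * P θ)
      = ∑ i ∈ Finset.Icc 1 m, ∫ θ in Ioi (0:ℝ), c * (1 / ((θ + i) * P θ)) := by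
        refine Finset.sum_congr rfl fun i _ => ?_
        rw [MeasureTheory.integral_const_mul]
    _ = ∫ θ in Ioi (0:ℝ), ∑ i ∈ Finset.Icc 1 m, c * (1 / ((θ + i) * P θ)) := by
        rw [MeasureTheory.integral_finset_sum _ hterm]
    _ = ∫ θ in Ioi (0:ℝ), G θ := by
        apply setIntegral_congr_fun measurableSet_Ioi
        intro θ hθ
        simp only [mem_Ioi] at hθ
        show ∑ i ∈ Finset.Icc 1 m, c * (1 / ((θ + i) * P θ)) = G θ
        rw [hkey θ (le_of_lt hθ), ← Finset.Ico_add_one_right_eq_Icc, Finset.sum_Ico_eq_sum_range]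
        refine Finset.sum_congr (by norm_num) fun j _ => ?_
        push_cast
        ring_nf
    _ = 1 := hvalue
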